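/- arXiv:2305.15874 — 2 statements merged into one kernel-verified Lean document; each statement's English description precedes it below -/
import Mathlib

section
/- Let f be a polynomial with integer coefficients of degree d ≥ 1, and let p be a prime such that the p-adic valuation of the discriminant of f equals 1. Then the reduction of f modulo p has no root (in an algebraic closure of F_p) of multiplicity three or higher. -/
set_option maxHeartbeats 1000000

open Polynomial

/-- The Sylvester matrix of two polynomials. -/
noncomputable def sylvesterMatrix {R : Type*} [CommRing R] (f g : R[X]) :
    Matrix (Fin (f.natDegree + g.natDegree)) (Fin (f.natDegree + g.natDegree)) R :=
  Matrix.of fun i j =>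
    if (i : ℕ) < g.natDegree then
      (if (i : ℕ) ≤ (j : ℕ) then f.coeff ((j : ℕ) - (i : ℕ)) else 0)
    else
      (if (i : ℕ) - g.natDegree ≤ (j : ℕ) then g.coeff ((j : ℕ) - ((i : ℕ) - g.natDegree)) else 0)

/-- The resultant of two polynomials, as the determinant of the Sylvester matrix. -/
noncomputable def resultant {R : Type*} [CommRing R] (f g : R[X]) : R :=
  (sylvesterMatrix f g).det

/-- The discriminant of an integer polynomial:
`disc f = (-1)^(n(n-1)/2) * Res(f, f') / lc(f)`. -/
noncomputable def intDisc (f : ℤ[X]) : ℤ :=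
  (-1) ^ (f.natDegree * (f.natDegree - 1) / 2) * (_root_.resultant f (derivative f) / f.leadingCoeff)


open Matrix


theorem sq_dvd_det_aux {N : ℕ} (hN : 2 ≤ N) (p : ℕ) [hp : Fact p.Prime]
    (M : Matrix (Fin N) (Fin N) ℤ)
    {V : Type} [AddCommGroup V] [Module (ZMod p) V]
    (ψ : (Fin N → ZMod p) →ₗ[ZMod p] V) (hψ : Function.Injective ψ)
    (W : Submodule (ZMod p) V) [FiniteDimensional (ZMod p) W]
    (hW : Module.finrank (ZMod p) W + 2 ≤ N)
    (hrows : ∀ i, ψ ((M.map (Int.cast : ℤ → ZMod p)) i) ∈ W) :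
    (p : ℤ) ^ 2 ∣ M.det := by
  classical
  set A : Matrix (Fin N) (Fin N) (ZMod p) := M.map (Int.cast : ℤ → ZMod p) with hA
  have hadj : adjugate A = 0 := by
    ext i j
    rw [adjugate_apply]
    by_contra hdet
    have hunit : IsUnit (A.updateRow j (Pi.single i 1)) :=
      (Matrix.isUnit_iff_isUnit_det _).2 (Ne.isUnit hdet)
    have hli : LinearIndependent (ZMod p) (fun r => (A.updateRow j (Pi.single i 1)) r) :=
      Matrix.linearIndependent_rows_iff_isUnit.2 hunit
    have hli2 : LinearIndependent (ZMod p)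
        (fun r : {r : Fin N // r ≠ j} => (A.updateRow j (Pi.single i 1)) (r : Fin N)) :=
      hli.comp _ Subtype.val_injective
    have heq : (fun r : {r : Fin N // r ≠ j} => (A.updateRow j (Pi.single i 1)) (r : Fin N))
        = fun r : {r : Fin N // r ≠ j} => A (r : Fin N) := by
      funext r
      exact Matrix.updateRow_ne r.2
    rw [heq] at hli2
    have hli3 : LinearIndependent (ZMod p) (fun r : {r : Fin N // r ≠ j} => ψ (A (r : Fin N))) :=
      hli2.map' ψ (LinearMap.ker_eq_bot.2 hψ)
    have hspan : Submodule.span (ZMod p)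
        (Set.range (fun r : {r : Fin N // r ≠ j} => ψ (A (r : Fin N)))) ≤ W := by
      rw [Submodule.span_le]
      rintro x ⟨r, rfl⟩
      exact hrows r
    have hcard : Fintype.card {r : Fin N // r ≠ j} ≤ Module.finrank (ZMod p) W := by
      rw [← finrank_span_eq_card hli3]
      exact Submodule.finrank_mono hspan
    rw [Fintype.card_subtype_compl, Fintype.card_fin, Fintype.card_subtype_eq] at hcard
    omega
  have hdvd : ∀ i j, (p : ℤ) ∣ adjugate M i j := by
    intro i j
    have h0 : (Int.castRingHom (ZMod p)).mapMatrix (adjugate M) = 0 := by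
      rw [RingHom.map_adjugate]
      exact hadj
    have : ((adjugate M i j : ℤ) : ZMod p) = 0 := by
      have := congrFun (congrFun (congrArg (fun (B : Matrix (Fin N) (Fin N) (ZMod p)) => B) h0) i) j
      simpa using this
    exact (ZMod.intCast_zmod_eq_zero_iff_dvd _ p).1 this
  -- write adjugate M = p • B
  set B : Matrix (Fin N) (Fin N) ℤ := Matrix.of (fun i j => adjugate M i j / p) with hB
  have hPB : adjugate M = (p : ℤ) • B := by
    ext i j
    simp only [hB, Matrix.smul_apply, Matrix.of_apply, smul_eq_mul]
    exact (Int.mul_ediv_cancel' (hdvd i j)).symm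
  have hdet : M.det ^ (N - 1) = (p : ℤ) ^ N * B.det := by
    have h1 : (adjugate M).det = M.det ^ (Fintype.card (Fin N) - 1) := Matrix.det_adjugate M
    rw [hPB, Matrix.det_smul, Fintype.card_fin] at h1
    exact h1.symm
  -- valuation argument
  rcases eq_or_ne M.det 0 with h | h
  · rw [h]; exact dvd_zero _
  have hdvdpow : (p : ℤ) ^ N ∣ M.det ^ (N - 1) := ⟨B.det, hdet⟩
  have hnat : p ^ N ∣ M.det.natAbs ^ (N - 1) := by
    have := Int.natAbs_dvd_natAbs.2 hdvdpow
    simpa [Int.natAbs_pow] using this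
  have hne : M.det.natAbs ≠ 0 := by simpa using h
  have hfact : N ≤ ((M.det.natAbs ^ (N - 1)).factorization) p := by
    exact (Nat.Prime.pow_dvd_iff_le_factorization hp.out (pow_ne_zero _ hne)).1 hnat
  rw [Nat.factorization_pow] at hfact
  simp only [Finsupp.smul_apply, smul_eq_mul] at hfact
  have h2 : 2 ≤ (M.det.natAbs).factorization p := by nlinarith [Nat.sub_lt (by omega : 0 < N) (by norm_num : 0 < 1)]
  have : p ^ 2 ∣ M.det.natAbs :=
    (Nat.Prime.pow_dvd_iff_le_factorization hp.out hne).2 h2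
  have := Int.natCast_dvd_natCast.2 this
  rwa [Int.natCast_pow, Int.dvd_natAbs] at this

theorem resultant_deg_one (f : ℤ[X]) (hn1 : f.natDegree = 1) :
    _root_.resultant f (derivative f) = f.leadingCoeff := by
  have hd0 : (derivative f).natDegree = 0 := by
    have := natDegree_derivative_le f
    omega
  have e : f.natDegree + (derivative f).natDegree = 1 := by omega
  have h := (Matrix.det_reindex_self (finCongr e) (sylvesterMatrix f (derivative f))).symm
  rw [_root_.resultant, h, Matrix.det_fin_one]
  simp only [Matrix.reindex_apply, Matrix.submatrix_apply, sylvesterMatrix, Matrix.of_apply,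
    finCongr_symm, finCongr_apply, Fin.coe_cast]
  rw [hd0]
  norm_num
  rw [coeff_derivative]
  rw [Polynomial.leadingCoeff, hn1]
  norm_num


/-- the row polynomials of the reduced (2m+2)-size matrix -/
noncomputable def rowPoly (f : ℤ[X]) (m : ℕ) (i : ℕ) : ℤ[X] :=
  if i < m then f * X ^ i
  else if i < 2*m+1 then derivative f * X ^ (i - m)
  else derivative f * X ^ (m+1) - C ((m : ℤ) + 2) * (f * X ^ m)

theorem resultant_factor (f : ℤ[X]) (m : ℕ) (hn : f.natDegree = m + 2) :
    _root_.resultant f (derivative f) = f.leadingCoeff *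
      ((-1) ^ (m + (2*m+2)) *
        (Matrix.of fun i j : Fin (2*m+2) => (rowPoly f m i).coeff j).det) := by
  classical
  have hf0 : f ≠ 0 := fun h => by simp [h] at hn
  have hd' : (derivative f).natDegree = m + 1 := by
    have := degree_derivative_eq f (by omega : 0 < f.natDegree)
    rw [hn] at this
    simpa using natDegree_eq_of_degree_eq_some this
  have e : f.natDegree + (derivative f).natDegree = 2*m+3 := by omega
  set S' : Matrix (Fin (2*m+3)) (Fin (2*m+3)) ℤ :=
    (sylvesterMatrix f (derivative f)).reindex (finCongr e) (finCongr e) with hS'def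
  have hdetS' : S'.det = _root_.resultant f (derivative f) := Matrix.det_reindex_self _ _
  have hS' : ∀ i j : Fin (2*m+3), S' i j =
      if (i : ℕ) < m+1 then
        (if (i : ℕ) ≤ (j : ℕ) then f.coeff ((j : ℕ) - (i : ℕ)) else 0)
      else
        (if (i : ℕ) - (m+1) ≤ (j : ℕ) then (derivative f).coeff ((j : ℕ) - ((i : ℕ) - (m+1))) else 0) := by
    intro i j
    rw [hS'def]
    simp only [Matrix.reindex_apply, Matrix.submatrix_apply, sylvesterMatrix, Matrix.of_apply,
      hd', finCongr_symm, finCongr_apply, Fin.coe_cast]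
  -- indices
  set midI : Fin (2*m+3) := ⟨m, by omega⟩ with hmidI
  set lastI : Fin (2*m+3) := ⟨2*m+2, by omega⟩ with hlastI
  have hvmid : (midI : ℕ) = m := rfl
  have hvlast : (lastI : ℕ) = 2*m+2 := rfl
  have hne : lastI ≠ midI := Fin.ne_of_val_ne (by omega)
  set S₂ : Matrix (Fin (2*m+3)) (Fin (2*m+3)) ℤ :=
    S'.updateRow lastI (S' lastI + (-((m:ℤ)+2)) • S' midI) with hS₂def
  have hdetS₂ : S₂.det = S'.det := Matrix.det_updateRow_add_smul_self S' hne _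
  -- the last column of S₂
  have hcol : ∀ i : Fin (2*m+3), i ≠ midI → S₂ i lastI = 0 := by
    intro i hi
    have hvi : (i : ℕ) < 2*m+3 := i.isLt
    have hvim : (i : ℕ) ≠ m := fun h => hi (Fin.eq_of_val_eq (by rw [h, hvmid]))
    rcases eq_or_ne i lastI with rfl | hil
    · rw [hS₂def, Matrix.updateRow_self]
      simp only [Pi.add_apply, Pi.smul_apply, smul_eq_mul]
      rw [hS' lastI lastI, hS' midI lastI, hvmid, hvlast]
      rw [if_neg (by omega : ¬(2*m+2 < m+1)), if_pos (by omega : 2*m+2 - (m+1) ≤ 2*m+2),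
        if_pos (by omega : m < m+1), if_pos (by omega : m ≤ 2*m+2)]
      have h1 : 2*m+2 - (2*m+2 - (m+1)) = m+1 := by omega
      have h2 : 2*m+2 - m = m + 2 := by omega
      rw [h1, h2, coeff_derivative]
      push_cast
      ring
    · have hvil : (i : ℕ) ≠ 2*m+2 := fun h => hil (Fin.eq_of_val_eq (by rw [h, hvlast]))
      rw [hS₂def, Matrix.updateRow_ne hil, hS' i lastI, hvlast]
      rcases lt_or_ge (i : ℕ) (m+1) with h | h
      · rw [if_pos h, if_pos (by omega : (i:ℕ) ≤ 2*m+2)]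
        apply coeff_eq_zero_of_natDegree_lt
        rw [hn]; omega
      · rw [if_neg (by omega), if_pos (by omega : (i:ℕ) - (m+1) ≤ 2*m+2)]
        apply coeff_eq_zero_of_natDegree_lt
        rw [hd']; omega
  have hmid : S₂ midI lastI = f.leadingCoeff := by
    rw [hS₂def, Matrix.updateRow_ne hne.symm, hS' midI lastI, hvmid, hvlast]
    rw [if_pos (by omega : m < m+1), if_pos (by omega : m ≤ 2*m+2)]
    have h2 : 2*m+2 - m = m+2 := by omega
    rw [h2, Polynomial.leadingCoeff, hn]
  have hexp : S₂.det = (-1 : ℤ) ^ ((midI : ℕ) + (lastI : ℕ)) * S₂ midI lastI *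
      (S₂.submatrix midI.succAbove lastI.succAbove).det := by
    have hh := Matrix.det_succ_column (S₂ : Matrix (Fin (2*m+2).succ) (Fin (2*m+2).succ) ℤ) lastI
    rw [hh, Finset.sum_eq_single_of_mem midI (Finset.mem_univ _)]
    intro b _ hb
    rw [hcol b hb]
    ring
  have hsub : S₂.submatrix midI.succAbove lastI.succAbove
      = Matrix.of (fun i j : Fin (2*m+2) => (rowPoly f m i).coeff j) := by
    ext i j
    have hjj : (lastI.succAbove j : ℕ) = (j : ℕ) := by
      have : lastI = Fin.last (2*m+2) := rfl
      rw [this, Fin.succAbove_last, Fin.coe_castSucc]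
    rw [Matrix.submatrix_apply, Matrix.of_apply]
    rcases lt_or_ge (i : ℕ) m with hi | hi
    · have hrow : midI.succAbove i = i.castSucc :=
        Fin.succAbove_of_castSucc_lt _ _ (by rw [Fin.lt_def, Fin.coe_castSucc, hvmid]; exact hi)
      have hnl : i.castSucc ≠ lastI := Fin.ne_of_val_ne (by rw [Fin.coe_castSucc, hvlast]; omega)
      rw [hrow, hS₂def, Matrix.updateRow_ne hnl, hS' _ _, hjj, Fin.coe_castSucc]
      rw [if_pos (by omega : (i:ℕ) < m+1)]
      rw [rowPoly, if_pos hi, coeff_mul_X_pow']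
    · have hrow : midI.succAbove i = i.succ :=
        Fin.succAbove_of_le_castSucc _ _ (by rw [Fin.le_def, Fin.coe_castSucc, hvmid]; exact hi)
      rcases lt_or_ge (i : ℕ) (2*m+1) with hi2 | hi2
      · have hnl : i.succ ≠ lastI := Fin.ne_of_val_ne (by rw [Fin.val_succ, hvlast]; omega)
        rw [hrow, hS₂def, Matrix.updateRow_ne hnl, hS' _ _, hjj, Fin.val_succ]
        rw [if_neg (by omega : ¬((i:ℕ)+1 < m+1))]
        have hsh : (i:ℕ)+1 - (m+1) = (i:ℕ) - m := by omega
        rw [hsh, rowPoly, if_neg (by omega : ¬((i:ℕ) < m)), if_pos hi2, coeff_mul_X_pow']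
      · have hieq : (i : ℕ) = 2*m+1 := by have := i.isLt; omega
        have hlst : i.succ = lastI := Fin.eq_of_val_eq (by rw [Fin.val_succ, hvlast, hieq])
        rw [hrow, hlst, hS₂def, Matrix.updateRow_self]
        simp only [Pi.add_apply, Pi.smul_apply, smul_eq_mul]
        rw [hS' lastI _, hS' midI _, hjj, hvmid, hvlast]
        rw [if_neg (by omega : ¬(2*m+2 < m+1)), if_pos (by omega : m < m+1)]
        have hsh : 2*m+2 - (m+1) = m+1 := by omega
        rw [hsh, rowPoly, if_neg (by omega : ¬((i:ℕ) < m)), if_neg (by omega : ¬((i:ℕ) < 2*m+1))]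
        rw [coeff_sub, coeff_C_mul, coeff_mul_X_pow', coeff_mul_X_pow']
        split_ifs <;> push_cast <;> ring
  rw [← hdetS', ← hdetS₂, hexp, hmid, hsub, hvmid, hvlast]
  ring
lemma mem_degreeLT_of_natDegree_lt {k : Type*} [Field k] {q : k[X]} {t : ℕ}
    (h : q ≠ 0 → q.natDegree < t) : q ∈ degreeLT k t := by
  rw [Polynomial.mem_degreeLT]
  rcases eq_or_ne q 0 with rfl | hq
  · simp only [degree_zero]
    exact WithBot.bot_lt_coe _
  · exact lt_of_le_of_lt (degree_le_natDegree) (by exact_mod_cast h hq)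

lemma rowPoly_natDegree_le (f : ℤ[X]) (m : ℕ) (hn : f.natDegree = m + 2) (i : ℕ) :
    (rowPoly f m i).natDegree ≤ 2*m+1 := by
  have hd1 : (derivative f).natDegree ≤ m + 1 := by
    have := natDegree_derivative_le f
    omega
  rw [rowPoly]
  split_ifs with h1 h2
  · refine le_trans (natDegree_mul_le) ?_
    rw [natDegree_X_pow]
    omega
  · refine le_trans (natDegree_mul_le) ?_
    rw [natDegree_X_pow]
    omega
  · rw [natDegree_le_iff_coeff_eq_zero]
    intro N hN
    rw [coeff_sub, coeff_C_mul, coeff_mul_X_pow', coeff_mul_X_pow']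
    rcases eq_or_ne N (2*m+2) with rfl | hne
    · rw [if_pos (by omega : m+1 ≤ 2*m+2), if_pos (by omega : m ≤ 2*m+2)]
      have e1 : 2*m+2 - (m+1) = m+1 := by omega
      have e2 : 2*m+2 - m = m+2 := by omega
      rw [e1, e2, coeff_derivative]
      have : f.coeff (m+1+1) = f.coeff (m+2) := by norm_num
      rw [this]
      push_cast
      ring
    · have hN' : 2*m+2 < N := by omega
      rw [if_pos (by omega : m+1 ≤ N), if_pos (by omega : m ≤ N)]
      rw [coeff_eq_zero_of_natDegree_lt (by omega : (derivative f).natDegree < N - (m+1)),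
        coeff_eq_zero_of_natDegree_lt (by omega : f.natDegree < N - m)]
      ring

theorem sq_dvd_rowPoly_det (f : ℤ[X]) (m : ℕ) (hn : f.natDegree = m + 2)
    (p : ℕ) [hp : Fact p.Prime] (α : AlgebraicClosure (ZMod p))
    (hα : (X - C α) ^ 3 ∣ f.map (Int.castRingHom (AlgebraicClosure (ZMod p)))) :
    (p:ℤ)^2 ∣ (Matrix.of fun i j : Fin (2*m+2) => (rowPoly f m i).coeff j).det := by
  classical
  revert hα
  revert α
  set k := ZMod p
  set K := AlgebraicClosure (ZMod p)
  set φ : ℤ →+* k := Int.castRingHom k with hφ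
  set β : k →+* K := algebraMap k K with hβ
  have hβi : Function.Injective β := β.injective
  have hcomp : ∀ g : ℤ[X], (g.map φ).map β = g.map (Int.castRingHom K) := by
    intro g
    rw [Polynomial.map_map]
    congr 1
  intro α hα
  set fb : k[X] := f.map φ with hfb
  -- the row polynomials over k
  set Q : Fin (2*m+2) → k[X] := fun i => (rowPoly f m (i : ℕ)).map φ with hQ
  have hQdeg : ∀ i, (Q i).natDegree ≤ 2*m+1 := fun i =>
    le_trans (natDegree_map_le) (rowPoly_natDegree_le f m hn i)
  have hQmem : ∀ i, Q i ∈ degreeLT k (2*m+2) :=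
    fun i => mem_degreeLT_of_natDegree_lt (fun _ => by have := hQdeg i; omega)
  -- ψ : vectors to polynomials
  set ψ : (Fin (2*m+2) → k) →ₗ[k] k[X] :=
    (degreeLT k (2*m+2)).subtype.comp
      ((degreeLTEquiv k (2*m+2)).symm : (Fin (2*m+2) → k) ≃ₗ[k] degreeLT k (2*m+2)).toLinearMap
      with hψ
  have hψinj : Function.Injective ψ :=
    (Submodule.injective_subtype _).comp (LinearEquiv.injective _)
  -- the rows of the reduced matrix, mapped to k, are the coefficient vectors of Q i
  set T : Matrix (Fin (2*m+2)) (Fin (2*m+2)) ℤ :=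
    Matrix.of fun i j : Fin (2*m+2) => (rowPoly f m i).coeff j with hT
  have hrow : ∀ i, (T.map (Int.cast : ℤ → k)) i = fun j : Fin (2*m+2) => (Q i).coeff (j : ℕ) := by
    intro i
    funext j
    simp only [Matrix.map_apply, hT, Matrix.of_apply, hQ, Polynomial.coeff_map]
    rfl
  have hψrow : ∀ i, ψ ((T.map (Int.cast : ℤ → k)) i) = Q i := by
    intro i
    rw [hrow i, hψ]
    simp only [LinearMap.coe_comp, Function.comp_apply, LinearEquiv.coe_coe,
      Submodule.coe_subtype]
    have : (degreeLTEquiv k (2*m+2)).symm (fun j : Fin (2*m+2) => (Q i).coeff (j:ℕ))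
        = ⟨Q i, hQmem i⟩ := by
      rw [LinearEquiv.symm_apply_eq]
      rfl
    rw [this]
  -- divisibility of rows by the gcd, and the two cases
  rcases eq_or_ne fb 0 with hfb0 | hfb0
  · -- all rows vanish mod p
    have hder : (derivative f).map φ = 0 := by
      rw [← derivative_map, ← hfb, hfb0, derivative_zero]
    have hQ0 : ∀ i, Q i = 0 := by
      intro i
      simp only [hQ, rowPoly]
      split_ifs <;>
        simp only [Polynomial.map_mul, Polynomial.map_pow, Polynomial.map_X,
          Polynomial.map_sub, Polynomial.map_C, ← hfb, hfb0, hder, zero_mul, mul_zero,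
          sub_zero, zero_sub, neg_zero]
    refine sq_dvd_det_aux (by omega) p T ψ hψinj ⊥ ?_ ?_
    · rw [finrank_bot]
      omega
    · intro i
      rw [hψrow i, hQ0 i]
      exact Submodule.zero_mem ⊥
  · set d : k[X] := EuclideanDomain.gcd fb (derivative fb) with hd
    have hfbd : d ∣ fb := EuclideanDomain.gcd_dvd_left _ _
    have hfb'd : d ∣ derivative fb := EuclideanDomain.gcd_dvd_right _ _
    have hd0 : d ≠ 0 := by
      intro h
      rw [hd] at h
      exact hfb0 (EuclideanDomain.gcd_eq_zero_iff.mp h).1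
    -- the gcd has degree at least 2
    have hddeg : 2 ≤ d.natDegree := by
      have hfK : fb.map β = f.map (Int.castRingHom K) := hcomp f
      have h3 : (X - C α)^3 ∣ fb.map β := by rw [hfK]; exact hα
      have h2f : (X - C α)^2 ∣ fb.map β := (pow_dvd_pow _ (by norm_num)).trans h3
      have h2d : (X - C α)^2 ∣ derivative (fb.map β) := by
        obtain ⟨q, hq⟩ := h3
        rw [hq, derivative_mul, derivative_pow]
        refine dvd_add (Dvd.dvd.mul_right (Dvd.dvd.mul_right ?_ _) q) ?_
        · norm_num
        · exact Dvd.dvd.mul_right (pow_dvd_pow _ (by norm_num)) _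
      have hbez : d = fb * EuclideanDomain.gcdA fb (derivative fb)
          + derivative fb * EuclideanDomain.gcdB fb (derivative fb) :=
        EuclideanDomain.gcd_eq_gcd_ab _ _
      have h2dK : (X - C α)^2 ∣ d.map β := by
        rw [hbez, Polynomial.map_add, Polynomial.map_mul, Polynomial.map_mul]
        refine dvd_add (Dvd.dvd.mul_right h2f _) (Dvd.dvd.mul_right ?_ _)
        rw [show Polynomial.map β (derivative fb) = derivative (Polynomial.map β fb) from
          (derivative_map fb β).symm]
        exact h2d
      have hdK0 : d.map β ≠ 0 := (Polynomial.map_ne_zero_iff hβi).2 hd0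
      have h2le := Polynomial.natDegree_le_of_dvd h2dK hdK0
      rw [natDegree_pow, natDegree_X_sub_C, natDegree_map] at h2le
      omega
    have hdQ : ∀ i : Fin (2*m+2), d ∣ Q i := by
      intro i
      simp only [hQ, rowPoly]
      split_ifs <;>
        simp only [Polynomial.map_mul, Polynomial.map_pow, Polynomial.map_X,
          Polynomial.map_sub, Polynomial.map_C, ← derivative_map, ← hfb]
      · exact hfbd.mul_right _
      · exact hfb'd.mul_right _
      · exact dvd_sub (hfb'd.mul_right _) ((hfbd.mul_right _).mul_left _)
    set W : Submodule k k[X] :=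
      Submodule.map (LinearMap.mulLeft k d) (degreeLT k (2*m)) with hW
    haveI : Module.Finite k (degreeLT k (2*m)) :=
      Module.Finite.equiv (degreeLTEquiv k (2*m)).symm
    haveI : Module.Finite k W := Module.Finite.map _ _
    have hWrank : Module.finrank k W + 2 ≤ 2*m+2 := by
      have h1 : Module.finrank k W ≤ Module.finrank k (degreeLT k (2*m)) :=
        Submodule.finrank_map_le _ _
      have h2 : Module.finrank k (degreeLT k (2*m)) = 2*m := by
        rw [LinearEquiv.finrank_eq (degreeLTEquiv k (2*m))]
        exact Module.finrank_fin_fun k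
      omega
    refine sq_dvd_det_aux (by omega) p T ψ hψinj W hWrank ?_
    intro i
    rw [hψrow i]
    rcases eq_or_ne (Q i) 0 with hQi0 | hQi0
    · rw [hQi0]
      exact W.zero_mem
    · obtain ⟨q, hq⟩ := hdQ i
      have hq0 : q ≠ 0 := by
        rintro rfl
        rw [mul_zero] at hq
        exact hQi0 hq
      have hdeg : (Q i).natDegree = d.natDegree + q.natDegree := by
        rw [hq]
        exact natDegree_mul hd0 hq0
      have hqdeg : q.natDegree < 2*m := by
        have := hQdeg i
        omega
      exact Submodule.mem_map.2 ⟨q, mem_degreeLT_of_natDegree_lt (fun _ => hqdeg),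
        by rw [LinearMap.mulLeft_apply]; exact hq.symm⟩

theorem no_triple_root_of_padicValInt_disc_eq_one
    (f : ℤ[X]) (hd : 1 ≤ f.natDegree) (p : ℕ) [Fact p.Prime]
    (hdisc : intDisc f ≠ 0) (hv : padicValInt p (intDisc f) = 1) :
    ∀ α : AlgebraicClosure (ZMod p),
      ¬ ((X - C α) ^ 3 ∣ f.map (Int.castRingHom (AlgebraicClosure (ZMod p)))) := by
  intro α hα
  have hf0 : f ≠ 0 := fun h => by simp [h] at hd
  have hlc : f.leadingCoeff ≠ 0 := leadingCoeff_ne_zero.2 hf0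
  rcases Nat.lt_or_ge f.natDegree 2 with h1 | h2
  · -- degree 1 : the discriminant is 1
    have hn1 : f.natDegree = 1 := by omega
    have : intDisc f = 1 := by
      rw [intDisc, resultant_deg_one f hn1, hn1, Int.ediv_self hlc]
      norm_num
    rw [this] at hv
    simp [padicValInt] at hv
  · obtain ⟨m, hm⟩ : ∃ m, f.natDegree = m + 2 := ⟨f.natDegree - 2, by omega⟩
    have hfac := resultant_factor f m hm
    have hdvdD := sq_dvd_rowPoly_det f m hm p α hα
    set D : ℤ := (Matrix.of fun i j : Fin (2*m+2) => (rowPoly f m i).coeff j).det with hD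
    set E : ℤ := (-1:ℤ)^(m + (2*m+2)) * D with hE
    have hED : (p:ℤ)^2 ∣ E := Dvd.dvd.mul_left hdvdD _
    have hdisc' : intDisc f = (-1)^(f.natDegree * (f.natDegree-1)/2) * E := by
      rw [intDisc, hfac, Int.mul_ediv_cancel_left _ hlc]
    have hE0 : E ≠ 0 := fun h => hdisc (by rw [hdisc', h, mul_zero])
    have h2le : 2 ≤ padicValInt p E := by
      have := (padicValInt_dvd_iff 2 E).1 hED
      tauto
    have hvE : padicValInt p (intDisc f) = padicValInt p E := by
      rw [hdisc']
      unfold padicValInt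
      rw [Int.natAbs_mul, Int.natAbs_pow]
      norm_num
    omega
end

section
/- Let f ∈ ℤ[X] with deg f = n ≥ 2 and let p be a prime not dividing the leading coefficient of f. If v_p(disc f) = 1, then the reduction f̄ ∈ F_p[X] factors as f̄ = (X − α)² g(X) over the algebraic closure of F_p, where α ∈ F_p (the repeated root is F_p-rational) and g is separable with g(α) ≠ 0. -/
open Polynomial

section Auxiliary

open Finset

lemma coeff_sum_C_mul_X_pow {R : Type*} [CommRing R] (c : ℕ → R) (b j : ℕ) :
    (∑ i ∈ range b, C (c i) * X ^ i).coeff j = if j < b then c j else 0 := by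
  rw [finset_sum_coeff]
  simp only [coeff_C_mul, coeff_X_pow]
  have : ∀ i ∈ range b, (c i * if j = i then 1 else 0) = if i = j then c j else 0 := by
    intro i _
    by_cases h : i = j
    · subst h; simp
    · rw [if_neg (fun h' : j = i => h h'.symm), if_neg h, mul_zero]
  rw [Finset.sum_congr rfl this, Finset.sum_ite_eq' (range b) j (fun _ => c j)]
  simp

lemma natDegree_sum_C_mul_X_pow_le {R : Type*} [CommRing R] (c : ℕ → R) (b : ℕ) (t : ℕ)
    (hb : b ≤ t + 1) :
    (∑ i ∈ range b, C (c i) * X ^ i).natDegree ≤ t := by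
  apply natDegree_sum_le_of_forall_le
  intro i hi
  exact (natDegree_C_mul_X_pow_le _ _).trans (by simp at hi; omega)

lemma coeff_sum_C_mul_X_pow_mul {R : Type*} [CommRing R] (P : R[X]) (b j : ℕ) (c : ℕ → R) :
    ((∑ i ∈ range b, C (c i) * X ^ i) * P).coeff j
      = ∑ i ∈ range b, c i * (if i ≤ j then P.coeff (j - i) else 0) := by
  rw [Finset.sum_mul, finset_sum_coeff]
  apply Finset.sum_congr rfl
  intro i _
  rw [mul_assoc, mul_comm (X ^ i) P, coeff_C_mul, coeff_mul_X_pow']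

lemma sum_range_sylvester {R : Type*} [CommRing R] (P Q : R[X]) (nn mm : ℕ) (r : ℕ → R) (j : ℕ) :
    (∑ k ∈ range (nn + mm), r k *
      (if k < mm then (if k ≤ j then P.coeff (j - k) else 0)
       else (if k - mm ≤ j then Q.coeff (j - (k - mm)) else 0)))
    = ((∑ i ∈ range mm, C (r i) * X ^ i) * P
        + (∑ i ∈ range nn, C (r (mm + i)) * X ^ i) * Q).coeff j := by
  rw [coeff_add, coeff_sum_C_mul_X_pow_mul, coeff_sum_C_mul_X_pow_mul]
  have hsplit : range (nn + mm) = Finset.Ico 0 mm ∪ Finset.Ico mm (nn + mm) := by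
    rw [Finset.Ico_union_Ico_eq_Ico (Nat.zero_le _) (Nat.le_add_left _ _), ← Finset.range_eq_Ico]
  rw [hsplit, Finset.sum_union (by
    apply Finset.Ico_disjoint_Ico_consecutive)]
  congr 1
  · rw [← Finset.range_eq_Ico]
    apply Finset.sum_congr rfl
    intro k hk
    simp only [Finset.mem_range] at hk
    rw [if_pos hk]
  · rw [Finset.sum_Ico_eq_sum_range]
    have : nn + mm - mm = nn := by omega
    rw [this]
    apply Finset.sum_congr rfl
    intro k _
    rw [if_neg (by omega)]
    have h2 : mm + k - mm = k := by omega
    rw [h2]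

lemma rowsum_of_entry {S : Type*} [CommRing S] (nf mg : ℕ)
    (A : Matrix (Fin (nf + mg)) (Fin (nf + mg)) S) (P Q : S[X])
    (hA : ∀ k j : Fin (nf + mg), A k j =
      if (k : ℕ) < mg then (if (k : ℕ) ≤ (j : ℕ) then P.coeff ((j : ℕ) - (k : ℕ)) else 0)
      else (if (k : ℕ) - mg ≤ (j : ℕ) then Q.coeff ((j : ℕ) - ((k : ℕ) - mg)) else 0))
    (r : ℕ → S) (j : Fin (nf + mg)) :
    (∑ k : Fin (nf + mg), r (k : ℕ) • A k) j
      = ((∑ i ∈ range mg, C (r i) * X ^ i) * P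
          + (∑ i ∈ range nf, C (r (mg + i)) * X ^ i) * Q).coeff (j : ℕ) := by
  rw [Finset.sum_apply]
  simp only [Pi.smul_apply, smul_eq_mul]
  rw [Finset.sum_congr rfl (fun k _ => by rw [hA k j])]
  rw [Fin.sum_univ_eq_sum_range (fun kn => r kn *
      (if kn < mg then (if kn ≤ (j : ℕ) then P.coeff ((j : ℕ) - kn) else 0)
       else (if kn - mg ≤ (j : ℕ) then Q.coeff ((j : ℕ) - (kn - mg)) else 0))) (nf + mg)]
  exact sum_range_sylvester P Q nf mg r (j : ℕ)

lemma sylvesterMatrix_entry {R : Type*} [CommRing R] (f g : R[X]) (k j : Fin (f.natDegree + g.natDegree)) :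
    sylvesterMatrix f g k j =
      if (k : ℕ) < g.natDegree then (if (k : ℕ) ≤ (j : ℕ) then f.coeff ((j : ℕ) - (k : ℕ)) else 0)
      else (if (k : ℕ) - g.natDegree ≤ (j : ℕ) then g.coeff ((j : ℕ) - ((k : ℕ) - g.natDegree)) else 0) := rfl

lemma sylvesterMatrix_map_entry {R S : Type*} [CommRing R] [CommRing S] (φ : R →+* S)
    (f g : R[X]) (k j : Fin (f.natDegree + g.natDegree)) :
    ((sylvesterMatrix f g).map φ) k j =
      if (k : ℕ) < g.natDegree then (if (k : ℕ) ≤ (j : ℕ) then (f.map φ).coeff ((j : ℕ) - (k : ℕ)) else 0)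
      else (if (k : ℕ) - g.natDegree ≤ (j : ℕ) then (g.map φ).coeff ((j : ℕ) - ((k : ℕ) - g.natDegree)) else 0) := by
  rw [Matrix.map_apply, sylvesterMatrix_entry]
  split_ifs <;> simp [coeff_map]

lemma resultant_eq_lc_mul (f : ℤ[X]) (hn : 2 ≤ f.natDegree)
    (hm : (derivative f).natDegree = f.natDegree - 1) :
    ∃ D : ℤ, _root_.resultant f (derivative f) = f.leadingCoeff * D := by
  set n := f.natDegree with hndef
  set m := (derivative f).natDegree with hmdef
  have hm1 : 1 ≤ m := by omega
  have hNpos : 0 < n + m := by omega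
  set M := sylvesterMatrix f (derivative f) with hM
  set jstar : Fin (n + m) := ⟨n + m - 1, by omega⟩ with hjstar
  set v : Fin (n + m) → ℤ := fun k =>
    if (k : ℕ) = m - 1 then 1 else if (k : ℕ) = n + m - 1 then (n : ℤ) else 0 with hv
  have hcol : (fun k => M k jstar) = f.leadingCoeff • v := by
    funext k
    have hkN : (k : ℕ) < n + m := k.2
    rw [hM, sylvesterMatrix_entry]
    show (if (k : ℕ) < m then _ else _) = f.leadingCoeff * v k
    rw [hv]
    simp only [hjstar]
    by_cases h1 : (k : ℕ) < m
    · rw [if_pos h1]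
      by_cases h2 : (k : ℕ) = m - 1
      · rw [if_pos (by omega : (k:ℕ) ≤ n + m - 1), if_pos h2]
        have : n + m - 1 - (k : ℕ) = n := by omega
        rw [this, mul_one, leadingCoeff, ← hndef]
      · rw [if_pos (by omega : (k:ℕ) ≤ n + m - 1), if_neg h2,
          if_neg (by omega : ¬ (k : ℕ) = n + m - 1), mul_zero]
        apply coeff_eq_zero_of_natDegree_lt
        omega
    · rw [if_neg h1]
      by_cases h3 : (k : ℕ) = n + m - 1
      · rw [if_pos (by omega : (k:ℕ) - m ≤ n + m - 1), if_neg (by omega : ¬ (k : ℕ) = m - 1),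
          if_pos h3]
        have : n + m - 1 - ((k : ℕ) - m) = n - 1 := by omega
        rw [this, coeff_derivative]
        have hcast : ((n - 1 : ℕ) : ℤ) + 1 = (n : ℤ) := by
          push_cast [Nat.cast_sub (by omega : 1 ≤ n)]; ring
        have : n - 1 + 1 = n := by omega
        rw [this, hcast, leadingCoeff, ← hndef, mul_comm]
      · rw [if_pos (by omega : (k:ℕ) - m ≤ n + m - 1), if_neg (by omega : ¬ (k : ℕ) = m - 1),
          if_neg h3, mul_zero]
        apply coeff_eq_zero_of_natDegree_lt
        omega
  refine ⟨(M.updateCol jstar v).det, ?_⟩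
  have : M = M.updateCol jstar (f.leadingCoeff • v) := by
    rw [← hcol, Matrix.updateCol_eq_self]
  calc _root_.resultant f (derivative f) = M.det := rfl
    _ = (M.updateCol jstar (f.leadingCoeff • v)).det := by rw [← this]
    _ = f.leadingCoeff * (M.updateCol jstar v).det := Matrix.det_updateCol_smul _ _ _ _

lemma not_isCoprime_of_dvd_resultant (f : ℤ[X]) (hn : 2 ≤ f.natDegree) (p : ℕ) [Fact p.Prime]
    (hm : (derivative f).natDegree = f.natDegree - 1)
    (hlcp : ¬ (p : ℤ) ∣ f.leadingCoeff)
    (hres : (p : ℤ) ∣ _root_.resultant f (derivative f)) :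
    ¬ IsCoprime (f.map (Int.castRingHom (ZMod p)))
      ((derivative f).map (Int.castRingHom (ZMod p))) := by
  intro hcop
  set φ := Int.castRingHom (ZMod p) with hφ
  set fb := f.map φ with hfb
  set fb' := (derivative f).map φ with hfb'
  set n := f.natDegree with hndef
  set m := (derivative f).natDegree with hmdef
  have hlcne : φ f.leadingCoeff ≠ 0 := by
    simpa [hφ, ZMod.intCast_zmod_eq_zero_iff_dvd] using hlcp
  have hfbdeg : fb.natDegree = n := natDegree_map_of_leadingCoeff_ne_zero φ hlcne
  have hfb'deg : fb'.natDegree ≤ m := natDegree_map_le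
  have hfbne : fb ≠ 0 := fun h => by
    rw [h] at hfbdeg; simp at hfbdeg; omega
  -- determinant of mapped Sylvester matrix is zero
  set Mb := (sylvesterMatrix f (derivative f)).map φ with hMb
  have hdet : Mb.det = 0 := by
    have h1 : φ (_root_.resultant f (derivative f)) = ((φ.mapMatrix) (sylvesterMatrix f (derivative f))).det :=
      RingHom.map_det φ _
    rw [RingHom.mapMatrix_apply] at h1
    rw [hMb, ← h1]
    simpa [hφ, ZMod.intCast_zmod_eq_zero_iff_dvd] using hres
  obtain ⟨v, hvne, hvM⟩ := Matrix.exists_vecMul_eq_zero_iff.mpr hdet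
  set rn : ℕ → ZMod p := fun k => if h : k < n + m then v ⟨k, h⟩ else 0 with hrn
  have hrnk : ∀ k : Fin (n + m), rn (k : ℕ) = v k := by
    intro k; rw [hrn]; simp only [k.2, dif_pos]; rfl
  set A := ∑ i ∈ range m, C (rn i) * X ^ i with hA
  set B := ∑ i ∈ range n, C (rn (m + i)) * X ^ i with hB
  have hcoeff : ∀ j : Fin (n + m), (A * fb + B * fb').coeff (j : ℕ) = 0 := by
    intro j
    rw [← rowsum_of_entry n m Mb fb fb' (fun k j => sylvesterMatrix_map_entry φ f (derivative f) k j) rn j]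
    have : (∑ k : Fin (n + m), rn (k : ℕ) • Mb k) = ∑ k : Fin (n + m), v k • Mb k := by
      apply Finset.sum_congr rfl; intro k _; rw [hrnk k]
    rw [this]
    have h2 : (∑ k : Fin (n + m), v k • Mb k) j = Matrix.vecMul v Mb j := by
      rw [Finset.sum_apply]
      simp [Matrix.vecMul, dotProduct, smul_eq_mul]; rfl
    rw [h2, hvM]
    rfl
  have hdegAfb : (A * fb).natDegree < n + m := by
    calc (A * fb).natDegree ≤ A.natDegree + fb.natDegree := natDegree_mul_le
      _ ≤ (m - 1) + n := by
          gcongr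
          · exact natDegree_sum_C_mul_X_pow_le _ _ _ (by omega)
          · omega
      _ < n + m := by omega
  have hdegBfb' : (B * fb').natDegree < n + m := by
    calc (B * fb').natDegree ≤ B.natDegree + fb'.natDegree := natDegree_mul_le
      _ ≤ (n - 1) + m := by
          gcongr
          exact natDegree_sum_C_mul_X_pow_le _ _ _ (by omega)
      _ < n + m := by omega
  have hP0 : A * fb + B * fb' = 0 := by
    ext c
    rw [coeff_zero]
    by_cases hc : c < n + m
    · exact hcoeff ⟨c, hc⟩
    · apply coeff_eq_zero_of_natDegree_lt
      calc (A * fb + B * fb').natDegree ≤ max (A * fb).natDegree (B * fb').natDegree :=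
            natDegree_add_le _ _
        _ < n + m := by omega
        _ ≤ c := by omega
  have hfbdvd : fb ∣ B := by
    apply hcop.dvd_of_dvd_mul_right
    exact ⟨-A, by linear_combination hP0⟩
  have hB0 : B = 0 := by
    rcases eq_or_ne B 0 with h | h
    · exact h
    · exact Polynomial.eq_zero_of_dvd_of_natDegree_lt hfbdvd
        (by
          calc B.natDegree ≤ n - 1 := natDegree_sum_C_mul_X_pow_le _ _ _ (by omega)
            _ < n := by omega
            _ = fb.natDegree := hfbdeg.symm)
  have hA0 : A = 0 := by
    have : A * fb = 0 := by rw [hB0] at hP0; simpa using hP0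
    rcases mul_eq_zero.mp this with h | h
    · exact h
    · exact absurd h hfbne
  apply hvne
  funext k
  have : rn (k : ℕ) = 0 := by
    by_cases hk : (k : ℕ) < m
    · have := congrArg (fun q => q.coeff (k : ℕ)) hA0
      simpa [hA, coeff_sum_C_mul_X_pow, hk] using this
    · have hkm : m + ((k : ℕ) - m) = (k : ℕ) := by omega
      have hlt : (k : ℕ) - m < n := by have := k.2; omega
      have := congrArg (fun q => q.coeff ((k : ℕ) - m)) hB0
      simp only [hB, coeff_sum_C_mul_X_pow, coeff_zero, hlt, if_pos] at this
      rwa [hkm] at this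
  rw [hrnk k] at this
  simpa using this

lemma sum_range_coeff_eq_self {R : Type*} [CommRing R] (P : R[X]) (b : ℕ) (h : P.natDegree < b) :
    ∑ i ∈ range b, C (P.coeff i) * X ^ i = P := by
  conv_rhs => rw [P.as_sum_range' b h]
  apply Finset.sum_congr rfl
  intro i _
  rw [C_mul_X_pow_eq_monomial]

noncomputable def Zlift (p : ℕ) (q : (ZMod p)[X]) : ℤ[X] :=
  ∑ i ∈ range (q.natDegree + 1), C (((q.coeff i).val : ℤ)) * X ^ i

lemma Zlift_coeff (p : ℕ) [NeZero p] (q : (ZMod p)[X]) (j : ℕ) :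
    (Zlift p q).coeff j = ((q.coeff j).val : ℤ) := by
  rw [Zlift, coeff_sum_C_mul_X_pow]
  split_ifs with h
  · rfl
  · rw [coeff_eq_zero_of_natDegree_lt (by omega)]
    simp [ZMod.val_zero]

lemma Zlift_map (p : ℕ) [NeZero p] (q : (ZMod p)[X]) :
    (Zlift p q).map (Int.castRingHom (ZMod p)) = q := by
  ext j
  rw [coeff_map, Zlift_coeff]
  simp [ZMod.natCast_val, ZMod.cast_id]

lemma Zlift_natDegree_le (p : ℕ) (q : (ZMod p)[X]) : (Zlift p q).natDegree ≤ q.natDegree := by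
  apply natDegree_sum_le_of_forall_le
  intro i hi
  exact (natDegree_C_mul_X_pow_le _ _).trans (by simp at hi; omega)

lemma updateRow_comm'' {R : Type*} {ι : Type*} [DecidableEq ι] (A : Matrix ι ι R)
    {i j : ι} (hij : i ≠ j) (u v : ι → R) :
    (A.updateRow i u).updateRow j v = (A.updateRow j v).updateRow i u := by
  ext k l
  by_cases h1 : k = j <;> by_cases h2 : k = i
  · exact absurd (h2.symm.trans h1) hij
  · simp [Matrix.updateRow_apply, h1, h2, Ne.symm hij]
  · simp [Matrix.updateRow_apply, h1, h2, hij]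
  · simp [Matrix.updateRow_apply, h1, h2]

lemma sq_dvd_resultant (f : ℤ[X]) (hn : 2 ≤ f.natDegree) (p : ℕ) [Fact p.Prime]
    (hm' : (derivative f).natDegree = f.natDegree - 1)
    (hlcp : ¬ (p : ℤ) ∣ f.leadingCoeff)
    (G : (ZMod p)[X]) (hd2 : 2 ≤ G.natDegree)
    (hGf : G ∣ f.map (Int.castRingHom (ZMod p)))
    (hGf' : G ∣ (derivative f).map (Int.castRingHom (ZMod p))) :
    ((p : ℤ)) ^ 2 ∣ _root_.resultant f (derivative f) := by
  have hpp : p.Prime := Fact.out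
  haveI : NeZero p := ⟨hpp.ne_zero⟩
  have hp : Prime (p : ℤ) := Nat.prime_iff_prime_int.mp hpp
  set φ := Int.castRingHom (ZMod p) with hφdef
  set fb := f.map φ with hfbdef
  set fb' := (derivative f).map φ with hfb'def
  set n := f.natDegree with hndef
  set m := (derivative f).natDegree with hmdef
  have hlcne : φ f.leadingCoeff ≠ 0 := by
    simpa [hφdef, ZMod.intCast_zmod_eq_zero_iff_dvd] using hlcp
  have hfbdeg : fb.natDegree = n := natDegree_map_of_leadingCoeff_ne_zero φ hlcne
  have hfbne : fb ≠ 0 := fun h => by rw [h] at hfbdeg; simp at hfbdeg; omega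
  obtain ⟨u, hu⟩ := hGf
  obtain ⟨v, hv⟩ := hGf'
  set d := G.natDegree with hddef
  have hGne : G ≠ 0 := fun h => hfbne (by rw [hu, h, zero_mul])
  have hune : u ≠ 0 := fun h => hfbne (by rw [hu, h, mul_zero])
  have hmuldeg : fb.natDegree = d + u.natDegree := by rw [hu, natDegree_mul hGne hune]
  have hudeg : u.natDegree = n - d := by omega
  have hdn : d ≤ n := by omega
  have hulc : u.coeff (n - d) ≠ 0 := by
    rw [← hudeg]
    exact leadingCoeff_ne_zero.mpr hune
  have hvdeg : v = 0 ∨ (2 ≤ m ∧ v.natDegree ≤ m - 2) := by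
    rcases eq_or_ne v 0 with h | h
    · exact Or.inl h
    · right
      have h1 : fb'.natDegree = d + v.natDegree := by rw [hv, natDegree_mul hGne h]
      have h2 : fb'.natDegree ≤ m := natDegree_map_le
      omega
  set U := Zlift p u with hUdef
  set V := Zlift p v with hVdef
  have hUmap : U.map φ = u := Zlift_map p u
  have hVmap : V.map φ = v := Zlift_map p v
  have hUdeg : U.natDegree ≤ n - d := hudeg ▸ Zlift_natDegree_le p u
  have hV0 : v = 0 → V = 0 := by
    intro h
    rw [hVdef, h]
    ext j
    rw [Zlift_coeff]
    simp
  have hXUdeg : (X * U).natDegree < n := by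
    calc (X * U).natDegree ≤ X.natDegree + U.natDegree := natDegree_mul_le
      _ ≤ 1 + (n - d) := by gcongr; exact natDegree_X_le
      _ < n := by omega
  have hUdeg' : U.natDegree < n := by omega
  have hXVdeg : (X * V).natDegree < m := by
    rcases hvdeg with h | ⟨h1, h2⟩
    · rw [hV0 h, mul_zero]
      simp only [natDegree_zero]
      omega
    · calc (X * V).natDegree ≤ X.natDegree + V.natDegree := natDegree_mul_le
        _ ≤ 1 + (m - 2) := by
            gcongr
            · exact natDegree_X_le
            · exact (Zlift_natDegree_le p v).trans h2
        _ < m := by omega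
  have hVdeg' : V.natDegree < m := by
    rcases hvdeg with h | ⟨h1, h2⟩
    · rw [hV0 h]; simp only [natDegree_zero]; omega
    · have hzv : V.natDegree ≤ m - 2 := (Zlift_natDegree_le p v).trans h2
      omega
  -- the two row-combination coefficient vectors
  set r1 : ℕ → ℤ := fun k => if k < m then V.coeff k else -(U.coeff (k - m)) with hr1def
  set r2 : ℕ → ℤ := fun k => if k < m then (X * V).coeff k else -((X * U).coeff (k - m)) with hr2def
  set T1 := V * f + (-U) * derivative f with hT1def
  set T2 := (X * V) * f + (-(X * U)) * derivative f with hT2def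
  set M := sylvesterMatrix f (derivative f) with hMdef
  have hMentry : ∀ k j : Fin (n + m), M k j =
      if (k : ℕ) < m then (if (k : ℕ) ≤ (j : ℕ) then f.coeff ((j : ℕ) - (k : ℕ)) else 0)
      else (if (k : ℕ) - m ≤ (j : ℕ) then (derivative f).coeff ((j : ℕ) - ((k : ℕ) - m)) else 0) :=
    fun k j => rfl
  -- identify row sums with coefficient vectors of T1, T2
  have hA1 : (∑ i ∈ range m, C (r1 i) * X ^ i) = V := by
    rw [Finset.sum_congr rfl (fun i hi => by
      rw [show r1 i = V.coeff i by rw [hr1def]; exact if_pos (mem_range.mp hi)])]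
    exact sum_range_coeff_eq_self _ _ hVdeg'
  have hB1 : (∑ i ∈ range n, C (r1 (m + i)) * X ^ i) = -U := by
    have h : ∀ i ∈ range n, C (r1 (m + i)) * X ^ i = -(C (U.coeff i) * X ^ i) := by
      intro i _
      have : r1 (m + i) = -(U.coeff i) := by
        rw [hr1def]
        simp only
        rw [if_neg (by omega)]
        congr 2
        omega
      rw [this, map_neg, neg_mul]
    rw [Finset.sum_congr rfl h, Finset.sum_neg_distrib,
      sum_range_coeff_eq_self _ _ hUdeg']
  have hA2 : (∑ i ∈ range m, C (r2 i) * X ^ i) = X * V := by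
    rw [Finset.sum_congr rfl (fun i hi => by
      rw [show r2 i = (X * V).coeff i by rw [hr2def]; exact if_pos (mem_range.mp hi)])]
    exact sum_range_coeff_eq_self _ _ hXVdeg
  have hB2 : (∑ i ∈ range n, C (r2 (m + i)) * X ^ i) = -(X * U) := by
    have h : ∀ i ∈ range n, C (r2 (m + i)) * X ^ i = -(C ((X * U).coeff i) * X ^ i) := by
      intro i _
      have : r2 (m + i) = -((X * U).coeff i) := by
        rw [hr2def]
        simp only
        rw [if_neg (by omega)]
        congr 2
        omega
      rw [this, map_neg, neg_mul]
    rw [Finset.sum_congr rfl h, Finset.sum_neg_distrib,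
      sum_range_coeff_eq_self _ _ hXUdeg]
  have hrow1 : ∀ j : Fin (n + m), (∑ k : Fin (n + m), r1 (k : ℕ) • M k) j = T1.coeff (j : ℕ) := by
    intro j
    rw [rowsum_of_entry n m M f (derivative f) hMentry r1 j, hA1, hB1, hT1def]
  have hrow2 : ∀ j : Fin (n + m), (∑ k : Fin (n + m), r2 (k : ℕ) • M k) j = T2.coeff (j : ℕ) := by
    intro j
    rw [rowsum_of_entry n m M f (derivative f) hMentry r2 j, hA2, hB2, hT2def]
  -- T1, T2 have all coefficients divisible by p
  have hT1map : T1.map φ = 0 := by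
    rw [hT1def]
    simp only [Polynomial.map_add, Polynomial.map_mul, Polynomial.map_neg, hUmap, hVmap]
    rw [show Polynomial.map φ f = fb from rfl, show Polynomial.map φ (derivative f) = fb' from rfl,
      hu, hv]
    ring
  have hT2map : T2.map φ = 0 := by
    rw [hT2def]
    simp only [Polynomial.map_add, Polynomial.map_mul, Polynomial.map_neg, Polynomial.map_X,
      hUmap, hVmap]
    rw [show Polynomial.map φ f = fb from rfl, show Polynomial.map φ (derivative f) = fb' from rfl,
      hu, hv]
    ring
  have hT1dvd : ∀ j : ℕ, (p : ℤ) ∣ T1.coeff j := by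
    intro j
    have h := congrArg (fun q => q.coeff j) hT1map
    simp only [coeff_map, coeff_zero] at h
    rwa [show φ (T1.coeff j) = ((T1.coeff j : ℤ) : ZMod p) from rfl,
      ZMod.intCast_zmod_eq_zero_iff_dvd] at h
  have hT2dvd : ∀ j : ℕ, (p : ℤ) ∣ T2.coeff j := by
    intro j
    have h := congrArg (fun q => q.coeff j) hT2map
    simp only [coeff_map, coeff_zero] at h
    rwa [show φ (T2.coeff j) = ((T2.coeff j : ℤ) : ZMod p) from rfl,
      ZMod.intCast_zmod_eq_zero_iff_dvd] at h
  -- positions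
  have hi0lt : m + (n - d + 1) < n + m := by omega
  have hi1lt : m + (n - d) < n + m := by omega
  set i0 : Fin (n + m) := ⟨m + (n - d + 1), hi0lt⟩ with hi0def
  set i1 : Fin (n + m) := ⟨m + (n - d), hi1lt⟩ with hi1def
  have hne01 : i0 ≠ i1 := by
    rw [hi0def, hi1def]
    simp [Fin.ext_iff]
  have hUcoeff : ∀ j : ℕ, U.coeff j = ((u.coeff j).val : ℤ) := fun j => Zlift_coeff p u j
  have hr1i0 : r1 (i0 : ℕ) = 0 := by
    rw [hr1def]
    simp only [hi0def]
    rw [if_neg (by omega)]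
    have : m + (n - d + 1) - m = n - d + 1 := by omega
    rw [this, hUcoeff, coeff_eq_zero_of_natDegree_lt (by omega)]
    simp
  have hval : ¬ (p : ℤ) ∣ ((u.coeff (n - d)).val : ℤ) := by
    intro hdvd
    apply hulc
    have h0 : (((u.coeff (n - d)).val : ℤ) : ZMod p) = 0 :=
      (ZMod.intCast_zmod_eq_zero_iff_dvd _ p).mpr hdvd
    rwa [Int.cast_natCast, ZMod.natCast_val, ZMod.cast_id] at h0
  have hr2i0 : ¬ (p : ℤ) ∣ r2 (i0 : ℕ) := by
    rw [hr2def]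
    simp only [hi0def]
    rw [if_neg (by omega)]
    have h1 : m + (n - d + 1) - m = (n - d) + 1 := by omega
    rw [h1, coeff_X_mul, hUcoeff]
    rw [Int.dvd_neg]
    exact hval
  have hr1i1 : ¬ (p : ℤ) ∣ r1 (i1 : ℕ) := by
    rw [hr1def]
    simp only [hi1def]
    rw [if_neg (by omega)]
    have h1 : m + (n - d) - m = n - d := by omega
    rw [h1, hUcoeff, Int.dvd_neg]
    exact hval
  -- determinant manipulations
  set c1 : Fin (n + m) → ℤ := fun k => r1 (k : ℕ) with hc1def
  set c2 : Fin (n + m) → ℤ := fun k => r2 (k : ℕ) with hc2def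
  set w1 : Fin (n + m) → ℤ := fun j => T1.coeff (j : ℕ) / p with hw1def
  set w2 : Fin (n + m) → ℤ := fun j => T2.coeff (j : ℕ) / p with hw2def
  have hS2 : (∑ k : Fin (n + m), c2 k • M k) = (p : ℤ) • w2 := by
    funext j
    rw [hrow2 j]
    simp only [Pi.smul_apply, hw2def, smul_eq_mul]
    exact (Int.mul_ediv_cancel' (hT2dvd (j : ℕ))).symm
  have hS1 : (∑ k : Fin (n + m), c1 k • M k) = (p : ℤ) • w1 := by
    funext j
    rw [hrow1 j]
    simp only [Pi.smul_apply, hw1def, smul_eq_mul]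
    exact (Int.mul_ediv_cancel' (hT1dvd (j : ℕ))).symm
  set M1 := M.updateRow i0 (∑ k : Fin (n + m), c2 k • M k) with hM1def
  have hstep1 : M1.det = c2 i0 * M.det := by
    rw [hM1def]
    simpa [smul_eq_mul] using Matrix.det_updateRow_sum M i0 c2
  have hsum_eq : (∑ k : Fin (n + m), c1 k • M1 k) = ∑ k : Fin (n + m), c1 k • M k := by
    apply Finset.sum_congr rfl
    intro k _
    by_cases hk : k = i0
    · have h0 : c1 i0 = 0 := hr1i0
      rw [hk, h0, zero_smul, zero_smul]
    · rw [hM1def, Matrix.updateRow_ne hk]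
  set M2 := M1.updateRow i1 (∑ k : Fin (n + m), c1 k • M1 k) with hM2def
  have hstep2 : M2.det = c1 i1 * M1.det := by
    rw [hM2def]
    simpa [smul_eq_mul] using Matrix.det_updateRow_sum M1 i1 c1
  have hdetM2 : M2.det = c1 i1 * (c2 i0 * M.det) := by rw [hstep2, hstep1]
  -- M2 has two rows divisible by p
  have hM2alt : M2 = (M.updateRow i1 ((p : ℤ) • w1)).updateRow i0 ((p : ℤ) • w2) := by
    rw [hM2def, hsum_eq, hS1, hM1def, hS2]
    exact updateRow_comm'' M hne01 _ _
  have hdvdM2 : (p : ℤ) ^ 2 ∣ M2.det := by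
    rw [hM2alt, Matrix.det_updateRow_smul,
      updateRow_comm'' M (Ne.symm hne01) ((p : ℤ) • w1) w2,
      Matrix.det_updateRow_smul]
    exact ⟨((M.updateRow i0 w2).updateRow i1 w1).det, by ring⟩
  have hkey : (p : ℤ) ^ 2 ∣ c1 i1 * (c2 i0 * M.det) := hdetM2 ▸ hdvdM2
  have hpne : (p : ℤ) ≠ 0 := fun h => hpp.ne_zero (by exact_mod_cast h)
  have hpM : (p : ℤ) ∣ M.det := by
    have h1 : (p : ℤ) ∣ c1 i1 * (c2 i0 * M.det) :=
      dvd_trans (dvd_pow_self (p : ℤ) two_ne_zero) hkey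
    rcases hp.dvd_mul.mp h1 with h | h
    · exact absurd h hr1i1
    · rcases hp.dvd_mul.mp h with h' | h'
      · exact absurd h' hr2i0
      · exact h'
  obtain ⟨e, he⟩ := hpM
  have hkey2 : (p : ℤ) * (p : ℤ) ∣ (p : ℤ) * (c1 i1 * (c2 i0 * e)) := by
    have heq : c1 i1 * (c2 i0 * M.det) = (p : ℤ) * (c1 i1 * (c2 i0 * e)) := by rw [he]; ring
    rw [← heq, ← sq]
    exact hkey
  have hpe : (p : ℤ) ∣ e := by
    have h1 : (p : ℤ) ∣ c1 i1 * (c2 i0 * e) := (mul_dvd_mul_iff_left hpne).mp hkey2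
    rcases hp.dvd_mul.mp h1 with h | h
    · exact absurd h hr1i1
    · rcases hp.dvd_mul.mp h with h' | h'
      · exact absurd h' hr2i0
      · exact h'
  obtain ⟨e', he'⟩ := hpe
  show (p : ℤ) ^ 2 ∣ M.det
  rw [he, he']
  exact ⟨e', by ring⟩

end Auxiliary

theorem factorization_of_padicValInt_disc_eq_one
    (f : ℤ[X]) (hn : 2 ≤ f.natDegree) (p : ℕ) [Fact p.Prime]
    (hlc : ¬ (p : ℤ) ∣ f.leadingCoeff)
    (hdisc : intDisc f ≠ 0) (hv : padicValInt p (intDisc f) = 1) :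
    ∃ a : ZMod p, ∃ g : Polynomial (AlgebraicClosure (ZMod p)),
      f.map (Int.castRingHom (AlgebraicClosure (ZMod p))) =
        (X - C (algebraMap (ZMod p) (AlgebraicClosure (ZMod p)) a)) ^ 2 * g ∧
      Squarefree g ∧
      Polynomial.eval (algebraMap (ZMod p) (AlgebraicClosure (ZMod p)) a) g ≠ 0 := by
  have hpp : p.Prime := Fact.out
  haveI : NeZero p := ⟨hpp.ne_zero⟩
  have hp : Prime (p : ℤ) := Nat.prime_iff_prime_int.mp hpp
  have hpne : (p : ℤ) ≠ 0 := fun h => hpp.ne_zero (by exact_mod_cast h)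
  have hlc0 : f.leadingCoeff ≠ 0 := fun h => hlc (h ▸ dvd_zero _)
  -- the derivative has degree n - 1
  have hm' : (derivative f).natDegree = f.natDegree - 1 := by
    apply le_antisymm (natDegree_derivative_le f)
    apply le_natDegree_of_ne_zero
    rw [coeff_derivative]
    have h1 : f.natDegree - 1 + 1 = f.natDegree := by omega
    rw [h1]
    apply mul_ne_zero
    · exact hlc0
    · have : ((f.natDegree - 1 : ℕ) : ℤ) + 1 ≠ 0 := by
        push_cast
        omega
      exact this
  -- relate intDisc to the resultant
  obtain ⟨D, hD⟩ := resultant_eq_lc_mul f hn hm'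
  have hdisc_eq : intDisc f = (-1) ^ (f.natDegree * (f.natDegree - 1) / 2) * D := by
    rw [intDisc, hD, Int.mul_ediv_cancel_left _ hlc0]
  set s : ℤ := (-1) ^ (f.natDegree * (f.natDegree - 1) / 2) with hsdef
  have hss : s * s = 1 := by
    rw [hsdef, ← pow_add, ← two_mul, pow_mul]
    norm_num
  have hdvd_disc : (p : ℤ) ∣ intDisc f := by
    have := (padicValInt_dvd_iff 1 (intDisc f)).mpr (Or.inr (le_of_eq hv.symm))
    simpa using this
  have hnotdvd_disc : ¬ (p : ℤ) ^ 2 ∣ intDisc f := by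
    intro h
    rcases (padicValInt_dvd_iff 2 (intDisc f)).mp h with h' | h'
    · exact hdisc h'
    · rw [hv] at h'
      exact absurd h' (by norm_num)
  have hDdisc : D = s * intDisc f := by
    rw [hdisc_eq, ← mul_assoc, hss, one_mul]
  have hdvdD : (p : ℤ) ∣ D := hDdisc ▸ (hdvd_disc.mul_left s)
  have hnotdvdD : ¬ (p : ℤ) ^ 2 ∣ D := fun h => hnotdvd_disc (hdisc_eq ▸ h.mul_left s)
  have hres1 : (p : ℤ) ∣ _root_.resultant f (derivative f) := hD ▸ hdvdD.mul_left _
  have hres2 : ¬ (p : ℤ) ^ 2 ∣ _root_.resultant f (derivative f) := by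
    intro h
    apply hnotdvdD
    rw [hD] at h
    -- p^2 ∣ lc * D with p prime not dividing lc
    obtain ⟨t, ht⟩ := hdvdD
    have h2 : (p : ℤ) * (p : ℤ) ∣ (p : ℤ) * (f.leadingCoeff * t) := by
      have heq : f.leadingCoeff * D = (p : ℤ) * (f.leadingCoeff * t) := by rw [ht]; ring
      rw [← heq, ← sq]
      exact h
    have h3 : (p : ℤ) ∣ f.leadingCoeff * t := (mul_dvd_mul_iff_left hpne).mp h2
    rcases hp.dvd_mul.mp h3 with h4 | h4
    · exact absurd h4 hlc
    · obtain ⟨t', ht'⟩ := h4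
      exact ⟨t', by rw [ht, ht']; ring⟩
  -- now work over ZMod p
  set φ := Int.castRingHom (ZMod p) with hφdef
  set fb := f.map φ with hfbdef
  set fb' := (derivative f).map φ with hfb'def
  have hlcne : φ f.leadingCoeff ≠ 0 := by
    simpa [hφdef, ZMod.intCast_zmod_eq_zero_iff_dvd] using hlc
  have hfbdeg : fb.natDegree = f.natDegree := natDegree_map_of_leadingCoeff_ne_zero φ hlcne
  have hfbne : fb ≠ 0 := fun h => by rw [h] at hfbdeg; simp at hfbdeg; omega
  have hncop := not_isCoprime_of_dvd_resultant f hn p hm' hlc hres1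
  rw [← hfbdef, ← hfb'def] at hncop
  set g1 := EuclideanDomain.gcd fb fb' with hg1def
  have hg1u : ¬ IsUnit g1 := fun h => hncop (EuclideanDomain.gcd_isUnit_iff.mp h)
  have hg1ne : g1 ≠ 0 := fun h => hfbne (EuclideanDomain.gcd_eq_zero_iff.mp h).1
  have hg1fb : g1 ∣ fb := EuclideanDomain.gcd_dvd_left fb fb'
  have hg1fb' : g1 ∣ fb' := EuclideanDomain.gcd_dvd_right fb fb'
  have hg1pos : 1 ≤ g1.natDegree := by
    rcases Nat.eq_zero_or_pos g1.natDegree with h0 | h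
    · exfalso
      apply hg1u
      have hc := eq_C_of_natDegree_eq_zero h0
      rw [hc]
      apply isUnit_C.mpr
      apply isUnit_iff_ne_zero.mpr
      intro hcc
      exact hg1ne (by rw [hc, hcc]; simp)
    · exact h
  have hg1deg : g1.natDegree = 1 := by
    by_contra h
    have h2 : 2 ≤ g1.natDegree := by omega
    exact hres2 (sq_dvd_resultant f hn p hm' hlc g1 h2 hg1fb hg1fb')
  have hdeg_le : g1.degree ≤ 1 := by
    rw [degree_eq_natDegree hg1ne, hg1deg]
    exact_mod_cast le_refl _
  have hc1ne : g1.coeff 1 ≠ 0 := by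
    have : g1.coeff g1.natDegree ≠ 0 := by
      rw [coeff_natDegree]
      exact leadingCoeff_ne_zero.mpr hg1ne
    rwa [hg1deg] at this
  set a : ZMod p := -(g1.coeff 0) * (g1.coeff 1)⁻¹ with hadef
  have hroot : g1.IsRoot a := by
    have hg1eq := eq_X_add_C_of_degree_le_one hdeg_le
    rw [IsRoot.def]
    conv_lhs => rw [hg1eq]
    simp only [eval_add, eval_mul, eval_C, eval_X, hadef]
    field_simp
    ring
  have hXa_g1 : (X - C a) ∣ g1 := dvd_iff_isRoot.mpr hroot
  have hXa_fb : (X - C a) ∣ fb := hXa_g1.trans hg1fb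
  have hXa_fb' : (X - C a) ∣ fb' := hXa_g1.trans hg1fb'
  obtain ⟨h1, hh1⟩ := hXa_fb
  have hder : derivative fb = fb' := by rw [hfbdef, hfb'def, derivative_map]
  have hXa_h1 : (X - C a) ∣ h1 := by
    have hd : fb' = h1 + (X - C a) * derivative h1 := by
      rw [← hder, hh1, derivative_mul, derivative_sub, derivative_X, derivative_C]
      ring
    have h2 := hXa_fb'
    rw [hd, add_comm] at h2
    exact (dvd_add_right (Dvd.intro _ rfl)).mp h2
  obtain ⟨g0, hg0⟩ := hXa_h1
  have hfb_factor : fb = (X - C a) ^ 2 * g0 := by rw [hh1, hg0]; ring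
  have hg0ne : g0 ≠ 0 := fun h => hfbne (by rw [hfb_factor, h, mul_zero])
  have hfb'_factor : fb' = (X - C a) * (C 2 * g0 + (X - C a) * derivative g0) := by
    rw [← hder, hfb_factor, derivative_mul, derivative_pow, derivative_sub,
      derivative_X, derivative_C]
    push_cast
    ring
  have heval : g0.eval a ≠ 0 := by
    intro h
    obtain ⟨t, ht⟩ := dvd_iff_isRoot.mpr h
    apply hres2
    apply sq_dvd_resultant f hn p hm' hlc ((X - C a) ^ 2)
      (le_of_eq (by rw [natDegree_pow, natDegree_X_sub_C]))
    · exact ⟨g0, hfb_factor⟩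
    · refine ⟨C 2 * t + derivative g0, ?_⟩
      show fb' = (X - C a) ^ 2 * (C 2 * t + derivative g0)
      rw [hfb'_factor, ht]; ring
  have hsep : g0.Separable := by
    rw [Polynomial.separable_def]
    by_contra hnc
    set g2 := EuclideanDomain.gcd g0 (derivative g0) with hg2def
    have hg2u : ¬ IsUnit g2 := fun h => hnc (EuclideanDomain.gcd_isUnit_iff.mp h)
    have hg2ne : g2 ≠ 0 := fun h => hg0ne (EuclideanDomain.gcd_eq_zero_iff.mp h).1
    have hg2g0 : g2 ∣ g0 := EuclideanDomain.gcd_dvd_left _ _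
    have hg2g0' : g2 ∣ derivative g0 := EuclideanDomain.gcd_dvd_right _ _
    have hg2pos : 1 ≤ g2.natDegree := by
      rcases Nat.eq_zero_or_pos g2.natDegree with h0 | h
      · exfalso
        apply hg2u
        have hc := eq_C_of_natDegree_eq_zero h0
        rw [hc]
        apply isUnit_C.mpr
        apply isUnit_iff_ne_zero.mpr
        intro hcc
        exact hg2ne (by rw [hc, hcc]; simp)
      · exact h
    have hG2deg : 2 ≤ ((X - C a) * g2).natDegree := by
      rw [natDegree_mul (X_sub_C_ne_zero a) hg2ne, natDegree_X_sub_C]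
      omega
    apply hres2
    apply sq_dvd_resultant f hn p hm' hlc ((X - C a) * g2) hG2deg
    · obtain ⟨t, ht⟩ := hg2g0
      refine ⟨(X - C a) * t, ?_⟩
      show fb = (X - C a) * g2 * ((X - C a) * t)
      rw [hfb_factor, ht]; ring
    · obtain ⟨t, ht⟩ := hg2g0
      obtain ⟨t', ht'⟩ := hg2g0'
      refine ⟨C 2 * t + (X - C a) * t', ?_⟩
      show fb' = (X - C a) * g2 * (C 2 * t + (X - C a) * t')
      rw [hfb'_factor, ht', ht]; ring
  -- map to the algebraic closure
  set K := AlgebraicClosure (ZMod p) with hKdef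
  set ψ := algebraMap (ZMod p) K with hψdef
  have hψinj : Function.Injective ψ := RingHom.injective ψ
  refine ⟨a, g0.map ψ, ?_, ?_, ?_⟩
  · have h1 : f.map (Int.castRingHom K) = fb.map ψ := by
      rw [hfbdef, Polynomial.map_map, RingHom.ext_int (ψ.comp φ) (Int.castRingHom K)]
    rw [h1, hfb_factor, Polynomial.map_mul, Polynomial.map_pow, Polynomial.map_sub,
      map_X, map_C]
  · exact (hsep.map (f := ψ)).squarefree
  · rw [eval_map, eval₂_at_apply]
    intro h
    exact heval ((map_eq_zero_iff ψ hψinj).mp h)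
end
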